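/- Let N ∈ ℕ, let ε > 0, let y ∈ ℝ^N, and let φ̃_{ij} ∈ ℝ for all i ≠ j in {1,...,N}. Let sgn_ε : ℝ → ℝ be any continuous function with |sgn_ε(d)| ≤ 1 for all d and sgn_ε(d) = sign(d) for |d| ≥ ε. Then there exists d ∈ ℝ^N such that y_i = d_i − (1/2) ∑_{j ≠ i} sgn_ε(d_j) · φ̃_{ij} for all i. -/

import Mathlib

open Finset
namespace KuhnProof

theorem Equiv.Perm.inv_apply_self {α : Type*} (f : Equiv.Perm α) (x : α) : f⁻¹ (f x) = x :=
  f.symm_apply_apply x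

theorem Equiv.Perm.apply_inv_self {α : Type*} (f : Equiv.Perm α) (x : α) : f (f⁻¹ x) = x :=
  f.apply_symm_apply x


/-- Parity of an involution: card of a finset is congruent mod 2 to card of fixed points. -/
theorem card_invol {α : Type*} [DecidableEq α] (t : Finset α) (f : α → α)
    (h1 : ∀ a ∈ t, f a ∈ t) (h2 : ∀ a ∈ t, f (f a) = a) :
    (t.card : ZMod 2) = ((t.filter fun a => f a = a).card : ZMod 2) := by
  classical
  induction t using Finset.strongInduction with
  | _ t ih =>
    by_cases hall : ∀ a ∈ t, f a = a
    · rw [Finset.filter_true_of_mem hall]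
    · push_neg at hall
      obtain ⟨a, ha, hfa⟩ := hall
      set t' := (t.erase a).erase (f a) with ht'
      have hfat : f a ∈ t := h1 a ha
      have hsub : t' ⊂ t := by
        refine Finset.ssubset_of_subset_of_ssubset ?_ (Finset.erase_ssubset ha)
        exact Finset.erase_subset _ _
      have hmem : ∀ b, b ∈ t' ↔ b ∈ t ∧ b ≠ a ∧ b ≠ f a := by
        intro b; simp [ht', and_comm, and_assoc]; tauto
      have h1' : ∀ b ∈ t', f b ∈ t' := by
        intro b hb
        rcases (hmem b).1 hb with ⟨hbt, hba, hbfa⟩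
        refine (hmem (f b)).2 ⟨h1 b hbt, ?_, ?_⟩
        · intro hh; apply hbfa; rw [← hh]; exact (h2 b hbt).symm
        · intro hh
          have := congrArg f hh
          rw [h2 b hbt, h2 a ha] at this
          exact hba this
      have h2' : ∀ b ∈ t', f (f b) = b := fun b hb => h2 b ((hmem b).1 hb).1
      have hcard : t.card = t'.card + 2 := by
        have hfa' : f a ∈ t.erase a := Finset.mem_erase.2 ⟨hfa, hfat⟩
        rw [ht', Finset.card_erase_of_mem hfa', Finset.card_erase_of_mem ha]
        have h2le : 2 ≤ t.card := by
          have : ({a, f a} : Finset α) ⊆ t := by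
            intro x hx; rcases Finset.mem_insert.1 hx with rfl | hx
            · exact ha
            · rw [Finset.mem_singleton.1 hx]; exact hfat
          calc 2 = ({a, f a} : Finset α).card := by
                  rw [Finset.card_insert_of_notMem (by simp only [Finset.mem_singleton]; intro h; exact hfa h.symm), Finset.card_singleton]
               _ ≤ t.card := Finset.card_le_card this
        omega
      have hfilt : t.filter (fun b => f b = b) = t'.filter (fun b => f b = b) := by
        ext b
        simp only [Finset.mem_filter, hmem]
        constructor
        · rintro ⟨hbt, hfb⟩
          refine ⟨⟨hbt, ?_, ?_⟩, hfb⟩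
          · rintro rfl; exact hfa hfb
          · rintro rfl; rw [h2 a ha] at hfb; exact hfa hfb.symm
        · rintro ⟨⟨hbt, _, _⟩, hfb⟩; exact ⟨hbt, hfb⟩
      rw [hcard, hfilt, ← ih t' hsub h1' h2']
      push_cast
      rw [show (2:ZMod 2) = 0 by rfl, add_zero]

/-! ### Basic definitions -/

/-- Kuhn simplex in the grid `{0,...,p}^n`: a base point (all coords `< p`) and an
ordering of the coordinate directions. -/
abbrev Spx (n p : ℕ) := (Fin n → Fin p) × Equiv.Perm (Fin n)

/-- The `j`-th vertex of a Kuhn simplex. -/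
def vert {n p : ℕ} (s : Spx n p) (j : Fin (n+1)) : Fin n → ℕ :=
  fun i => (s.1 i : ℕ) + if ((s.2⁻¹ i : Fin n) : ℕ) < (j : ℕ) then 1 else 0

lemma vert_le {n p : ℕ} (s : Spx n p) (j : Fin (n+1)) (i : Fin n) : vert s j i ≤ p := by
  have := (s.1 i).isLt
  unfold vert; split_ifs <;> omega

/-- `bitP ℓ x i` : the `i`-th bit of the label of `x` is false (or `i ≥ n`). -/
def bitP {n : ℕ} (ℓ : (Fin n → ℕ) → Fin n → Bool) (x : Fin n → ℕ) (i : ℕ) : Prop :=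
  ∀ h : i < n, ℓ x ⟨i, h⟩ = false

instance {n : ℕ} (ℓ : (Fin n → ℕ) → Fin n → Bool) (x : Fin n → ℕ) :
    DecidablePred (bitP ℓ x) := fun i => by
  unfold bitP
  exact if h : i < n then
    decidable_of_iff (ℓ x ⟨i, h⟩ = false) ⟨fun hh _ => hh, fun hh => hh h⟩
  else isTrue (fun hh => absurd hh h)

/-- The scalar label: index of the least false bit, or `n` if all bits true. -/
def rho {n : ℕ} (ℓ : (Fin n → ℕ) → Fin n → Bool) (x : Fin n → ℕ) : ℕ :=
  Nat.find (⟨n, fun h => absurd h (lt_irrefl n)⟩ : ∃ i, bitP ℓ x i)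

lemma rho_le {n : ℕ} (ℓ : (Fin n → ℕ) → Fin n → Bool) (x : Fin n → ℕ) : rho ℓ x ≤ n :=
  Nat.find_le (fun h => absurd h (lt_irrefl n))

lemma rho_bit_false {n : ℕ} {ℓ : (Fin n → ℕ) → Fin n → Bool} {x : Fin n → ℕ}
    (h : rho ℓ x < n) : ℓ x ⟨rho ℓ x, h⟩ = false :=
  Nat.find_spec (⟨n, fun h => absurd h (lt_irrefl n)⟩ : ∃ i, bitP ℓ x i) h

lemma bit_true_of_lt_rho {n : ℕ} {ℓ : (Fin n → ℕ) → Fin n → Bool} {x : Fin n → ℕ}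
    {i : ℕ} (h : i < rho ℓ x) (hn : i < n) : ℓ x ⟨i, hn⟩ = true := by
  have := Nat.find_min (⟨n, fun h => absurd h (lt_irrefl n)⟩ : ∃ i, bitP ℓ x i) h
  unfold bitP at this
  push_neg at this
  obtain ⟨h', hh⟩ := this
  simpa using hh

lemma rho_le_of_bit_false {n : ℕ} {ℓ : (Fin n → ℕ) → Fin n → Bool} {x : Fin n → ℕ}
    {i : ℕ} (hn : i < n) (h : ℓ x ⟨i, hn⟩ = false) : rho ℓ x ≤ i :=
  Nat.find_le (fun h' => h)

lemma rho_ne_of_bit_true {n : ℕ} {ℓ : (Fin n → ℕ) → Fin n → Bool} {x : Fin n → ℕ}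
    {i : ℕ} (hn : i < n) (h : ℓ x ⟨i, hn⟩ = true) : rho ℓ x ≠ i := by
  intro he
  have h2 : rho ℓ x < n := by omega
  have hb := rho_bit_false h2
  have he2 : (⟨rho ℓ x, h2⟩ : Fin n) = ⟨i, hn⟩ := Fin.ext he
  rw [he2, h] at hb
  simp at hb

variable {n p : ℕ} (ℓ : (Fin n → ℕ) → Fin n → Bool)

/-- Scalar label of vertex `j` of simplex `s`. -/
def Lab (s : Spx n p) (j : Fin (n+1)) : ℕ := rho ℓ (vert s j)

/-- A simplex is fully labelled if its vertex labels are exactly `{0,…,n}`. -/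
def IsFull (s : Spx n p) : Prop := ∀ m : Fin (n+1), ∃ j, Lab ℓ s j = (m : ℕ)

/-- `(s,j)` is a door: the labels of the vertices other than `j` cover `{0,…,n-1}`. -/
def IsDoorAt (s : Spx n p) (j : Fin (n+1)) : Prop :=
  ∀ m : Fin n, ∃ t, t ≠ j ∧ Lab ℓ s t = (m : ℕ)

instance (s : Spx n p) : Decidable (IsFull ℓ s) := by unfold IsFull; infer_instance
instance (s : Spx n p) (j : Fin (n+1)) : Decidable (IsDoorAt ℓ s j) := by
  unfold IsDoorAt; infer_instance

/-! ### Per-simplex door counting -/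

lemma doors_card (n : ℕ) (L : Fin (n+1) → ℕ) (hL : ∀ j, L j ≤ n) :
    (((univ.filter fun j => ∀ m : Fin n, ∃ t, t ≠ j ∧ L t = (m:ℕ)).card : ℕ) : ZMod 2)
      = if (∀ m : Fin (n+1), ∃ j, L j = (m:ℕ)) then 1 else 0 := by
  classical
  by_cases hfull : ∀ m : Fin (n+1), ∃ j, L j = (m:ℕ)
  · rw [if_pos hfull]
    -- L as a Fin-valued function is surjective, hence injective
    set L' : Fin (n+1) → Fin (n+1) := fun j => ⟨L j, Nat.lt_succ_of_le (hL j)⟩ with hL'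
    have hsurj : Function.Surjective L' := by
      intro m; obtain ⟨j, hj⟩ := hfull m; exact ⟨j, by simp [hL', hj]⟩
    have hinj : Function.Injective L' := Finite.injective_iff_surjective.2 hsurj
    obtain ⟨j₀, hj₀⟩ := hfull (Fin.last n)
    simp only [Fin.val_last] at hj₀
    have huniq : ∀ j, L j = n → j = j₀ := by
      intro j hj; apply hinj; simp [hL', hj, hj₀]
    have : (univ.filter fun j => ∀ m : Fin n, ∃ t, t ≠ j ∧ L t = (m:ℕ)) = {j₀} := by
      ext j
      simp only [Finset.mem_filter, Finset.mem_univ, true_and, Finset.mem_singleton]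
      constructor
      · intro hdoor
        by_contra hne
        have hjn : L j < n := by
          rcases Nat.lt_or_ge (L j) n with h | h
          · exact h
          · exact absurd (huniq j (le_antisymm (hL j) h)) hne
        obtain ⟨t, htj, ht⟩ := hdoor ⟨L j, hjn⟩
        exact htj (hinj (by simp [hL', ht]))
      · rintro rfl m
        obtain ⟨t, ht⟩ := hfull m.castSucc
        refine ⟨t, ?_, by simpa using ht⟩
        rintro rfl
        rw [hj₀] at ht
        have := m.isLt
        simp only [Fin.coe_castSucc] at ht
        omega
    rw [this, Finset.card_singleton, Nat.cast_one]
  · rw [if_neg hfull]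
    by_cases hD : ∃ j₀, ∀ m : Fin n, ∃ t, t ≠ j₀ ∧ L t = (m:ℕ)
    · obtain ⟨j₀, hdoor⟩ := hD
      choose c hc1 hc2 using hdoor
      have hcinj : Function.Injective c := by
        intro a b hab
        have := hc2 a; rw [hab, hc2 b] at this
        exact Fin.ext this.symm
      -- image of c is exactly univ.erase j₀
      have hcC : (univ.image c) = univ.erase j₀ := by
        apply Finset.eq_of_subset_of_card_le
        · intro t ht
          obtain ⟨m, _, rfl⟩ := Finset.mem_image.1 ht
          exact Finset.mem_erase.2 ⟨hc1 m, Finset.mem_univ _⟩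
        · rw [Finset.card_erase_of_mem (Finset.mem_univ _), Finset.card_image_of_injective _ hcinj]
          simp
      have hvals : ∀ t, t ≠ j₀ → ∃ m : Fin n, c m = t := by
        intro t ht
        have : t ∈ univ.image c := by rw [hcC]; exact Finset.mem_erase.2 ⟨ht, Finset.mem_univ _⟩
        obtain ⟨m, _, hm⟩ := Finset.mem_image.1 this
        exact ⟨m, hm⟩
      have hj₀n : L j₀ < n := by
        rcases Nat.lt_or_ge (L j₀) n with h | h
        · exact h
        · exfalso
          apply hfull
          intro m
          rcases Nat.lt_or_ge (m : ℕ) n with hm | hm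
          · exact ⟨c ⟨m, hm⟩, by rw [hc2]⟩
          · refine ⟨j₀, ?_⟩
            have h1 := m.isLt
            have h2 := hL j₀
            omega
      set t₀ := c ⟨L j₀, hj₀n⟩ with ht₀
      have hLt₀ : L t₀ = L j₀ := by rw [ht₀, hc2]
      have ht₀j₀ : t₀ ≠ j₀ := hc1 _
      have hset : (univ.filter fun j => ∀ m : Fin n, ∃ t, t ≠ j ∧ L t = (m:ℕ)) = {j₀, t₀} := by
        ext j
        simp only [Finset.mem_filter, Finset.mem_univ, true_and, Finset.mem_insert,
          Finset.mem_singleton]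
        constructor
        · intro hdj
          by_contra hne
          push_neg at hne
          obtain ⟨hne0, hnet⟩ := hne
          -- j = c m₁ for some m₁; find missing value
          obtain ⟨m₁, hm₁⟩ := hvals j hne0
          have hLj : L j = (m₁ : ℕ) := by rw [← hm₁, hc2]
          obtain ⟨t, htj, ht⟩ := hdj m₁
          -- t ≠ j with L t = m₁
          rcases eq_or_ne t j₀ with he | htj₀
          · have hLj₀ : L j₀ = (m₁ : ℕ) := by rw [← he]; exact ht
            exact hnet (by
              rw [ht₀, show (⟨L j₀, hj₀n⟩ : Fin n) = m₁ from Fin.ext hLj₀, hm₁])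
          · obtain ⟨m₂, hm₂⟩ := hvals t htj₀
            have : L t = (m₂ : ℕ) := by rw [← hm₂, hc2]
            have hm12 : m₂ = m₁ := Fin.ext (by omega)
            rw [hm12] at hm₂
            exact htj (by rw [← hm₂, hm₁])
        · rintro (rfl | rfl)
          · exact fun m => ⟨c m, hc1 m, hc2 m⟩
          · intro m
            rcases eq_or_ne (c m) t₀ with he | he
            · refine ⟨j₀, ht₀j₀.symm, ?_⟩
              have : L t₀ = (m:ℕ) := by rw [← he, hc2]
              omega
            · exact ⟨c m, he, hc2 m⟩
      rw [hset, Finset.card_insert_of_notMem (by simp [Ne.symm ht₀j₀]), Finset.card_singleton]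
      rfl
    · push_neg at hD
      have : (univ.filter fun j => ∀ m : Fin n, ∃ t, t ≠ j ∧ L t = (m:ℕ)) = ∅ := by
        apply Finset.filter_false_of_mem
        intro j _
        intro hj
        exact absurd hj (by simpa using hD j)
      simp [this]

lemma rot_inv_val (m : ℕ) (a : Fin (m+1)) :
    (((finRotate (m+1))⁻¹ a : Fin (m+1)) : ℕ) = if (a:ℕ) = 0 then m else (a:ℕ) - 1 := by
  set b := (finRotate (m+1))⁻¹ a with hb
  have hba : finRotate (m+1) b = a := by
    rw [hb]; exact Equiv.Perm.apply_inv_self _ _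
  rw [finRotate_succ_apply] at hba
  have hval : ((b + 1 : Fin (m+1)) : ℕ) = (a:ℕ) := by rw [hba]
  rw [Fin.val_add_one] at hval
  have hbl := b.isLt
  have hal := a.isLt
  split_ifs at hval with h
  · have h1 : (b:ℕ) = m := by rw [h]; simp
    rw [if_pos (by omega : (a:ℕ) = 0)]
    exact h1
  · have h1 : (b:ℕ) ≠ m := fun hh => h (Fin.ext (by simp [hh]))
    rw [if_neg (by omega : ¬(a:ℕ) = 0)]
    omega

lemma rot_val (m : ℕ) (a : Fin (m+1)) :
    ((finRotate (m+1) a : Fin (m+1)) : ℕ) = if (a:ℕ) = m then 0 else (a:ℕ) + 1 := by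
  rw [finRotate_succ_apply, Fin.val_add_one]
  split_ifs with h1 h2 h2
  · rfl
  · exact absurd (by rw [h1]; simp) h2
  · exact absurd (Fin.ext (by simp [h2])) h1
  · rfl


section
variable {n p : ℕ} (ℓ : (Fin n → ℕ) → Fin n → Bool)

lemma E_card :
    (((univ.filter fun e : Spx n p × Fin (n+1) => IsDoorAt ℓ e.1 e.2).card : ℕ) : ZMod 2)
      = (((univ.filter (IsFull (p := p) ℓ)).card : ℕ) : ZMod 2) := by
  classical
  rw [Finset.card_filter, Finset.card_filter]
  push_cast
  rw [Fintype.sum_prod_type]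
  have key : ∀ s : Spx n p,
      (∑ j : Fin (n+1), (if IsDoorAt ℓ s j then (1:ZMod 2) else 0))
        = (if IsFull ℓ s then (1:ZMod 2) else 0) := by
    intro s
    have h := doors_card n (Lab ℓ s) (fun j => rho_le _ _)
    rw [Finset.card_filter] at h
    push_cast at h
    exact h
  calc (∑ s : Spx n p, ∑ j : Fin (n+1), (if IsDoorAt ℓ s j then (1:ZMod 2) else 0))
      = ∑ s : Spx n p, (if IsFull ℓ s then (1:ZMod 2) else 0) :=
        Finset.sum_congr rfl (fun s _ => key s)
end

section
variable {m p : ℕ}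

/-- The pairing involution on (simplex, removed-vertex-index) pairs. -/
def flip (m p : ℕ) : Spx (m+1) p × Fin (m+2) → Spx (m+1) p × Fin (m+2)
  | ((b, π), j) =>
    if h0 : (j:ℕ) = 0 then
      if h : (b (π 0) : ℕ) + 1 < p then
        ((fun i => if hi : i = π 0 then (⟨(b i : ℕ) + 1, by rw [hi]; exact h⟩ : Fin p) else b i,
          π * finRotate (m+1)), Fin.last (m+1))
      else ((b, π), j)
    else if hl : (j:ℕ) = m+1 then
      if hz : (b (π (Fin.last m)) : ℕ) = 0 then ((b, π), j)
      else
        ((fun i => if i = π (Fin.last m) then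
              (⟨(b i : ℕ) - 1, lt_of_le_of_lt (Nat.sub_le _ _) (b i).isLt⟩ : Fin p) else b i,
          π * (finRotate (m+1))⁻¹), 0)
    else
      ((b, π * Equiv.swap (⟨(j:ℕ) - 1, by have := j.isLt; omega⟩ : Fin (m+1))
          (⟨(j:ℕ), by omega⟩ : Fin (m+1))), j)

lemma flip_middle (b : Fin (m+1) → Fin p) (π : Equiv.Perm (Fin (m+1))) (j : Fin (m+2))
    (hj1 : (j:ℕ) ≠ 0) (hj2 : (j:ℕ) < m+1) :
    flip m p ((b,π),j) = ((b, π * Equiv.swap (⟨(j:ℕ)-1, by omega⟩ : Fin (m+1))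
      (⟨(j:ℕ), hj2⟩ : Fin (m+1))), j) := by
  simp only [flip]
  rw [dif_neg hj1, dif_neg (by omega)]

lemma flip_zero (b : Fin (m+1) → Fin p) (π : Equiv.Perm (Fin (m+1))) (j : Fin (m+2))
    (hj : (j:ℕ) = 0) (h : (b (π 0) : ℕ) + 1 < p) :
    flip m p ((b,π),j) =
      ((fun i => if hi : i = π 0 then (⟨(b i : ℕ) + 1, by rw [hi]; exact h⟩ : Fin p) else b i,
        π * finRotate (m+1)), Fin.last (m+1)) := by
  simp only [flip]
  rw [dif_pos hj, dif_pos h]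

lemma flip_zero_bad (b : Fin (m+1) → Fin p) (π : Equiv.Perm (Fin (m+1))) (j : Fin (m+2))
    (hj : (j:ℕ) = 0) (h : ¬ ((b (π 0) : ℕ) + 1 < p)) :
    flip m p ((b,π),j) = ((b,π),j) := by
  simp only [flip]
  rw [dif_pos hj, dif_neg h]

lemma flip_last (b : Fin (m+1) → Fin p) (π : Equiv.Perm (Fin (m+1))) (j : Fin (m+2))
    (hj : (j:ℕ) = m+1) (hz : ¬ ((b (π (Fin.last m)) : ℕ) = 0)) :
    flip m p ((b,π),j) =
      ((fun i => if i = π (Fin.last m) then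
            (⟨(b i : ℕ) - 1, lt_of_le_of_lt (Nat.sub_le _ _) (b i).isLt⟩ : Fin p) else b i,
        π * (finRotate (m+1))⁻¹), 0) := by
  simp only [flip]
  rw [dif_neg (by omega), dif_pos hj, dif_neg hz]

lemma flip_last_fix (b : Fin (m+1) → Fin p) (π : Equiv.Perm (Fin (m+1))) (j : Fin (m+2))
    (hj : (j:ℕ) = m+1) (hz : (b (π (Fin.last m)) : ℕ) = 0) :
    flip m p ((b,π),j) = ((b,π),j) := by
  simp only [flip]
  rw [dif_neg (by omega), dif_pos hj, dif_pos hz]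
end

section
variable {m p : ℕ}

lemma vert_middle (b : Fin (m+1) → Fin p) (π : Equiv.Perm (Fin (m+1))) (j : Fin (m+2))
    (hj1 : (j:ℕ) ≠ 0) (hj2 : (j:ℕ) < m+1) (t : Fin (m+2)) (ht : t ≠ j) :
    vert ((b, π * Equiv.swap (⟨(j:ℕ)-1, by omega⟩ : Fin (m+1)) (⟨(j:ℕ), hj2⟩ : Fin (m+1)))
        : Spx (m+1) p) t = vert (b, π) t := by
  funext i
  unfold vert
  simp only [mul_inv_rev, Equiv.swap_inv, Equiv.Perm.mul_apply]
  have htj : (t:ℕ) ≠ (j:ℕ) := fun hh => ht (Fin.ext hh)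
  set a := π⁻¹ i with ha
  rcases eq_or_ne a ⟨(j:ℕ)-1, by omega⟩ with he | he1
  · rw [he, Equiv.swap_apply_left]
    simp only [Fin.val_mk]
    split_ifs <;> omega
  · rcases eq_or_ne a ⟨(j:ℕ), hj2⟩ with he | he2
    · rw [he, Equiv.swap_apply_right]
      simp only [Fin.val_mk]
      split_ifs <;> omega
    · rw [Equiv.swap_apply_of_ne_of_ne he1 he2]

lemma vert_rot0 (b : Fin (m+1) → Fin p) (π : Equiv.Perm (Fin (m+1)))
    (h : (b (π 0) : ℕ) + 1 < p) (u : Fin (m+1)) :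
    vert (((fun i => if hi : i = π 0 then (⟨(b i : ℕ) + 1, by rw [hi]; exact h⟩ : Fin p)
        else b i), π * finRotate (m+1)) : Spx (m+1) p) u.castSucc
      = vert (b, π) u.succ := by
  funext i
  unfold vert
  simp only [mul_inv_rev, Equiv.Perm.mul_apply, Fin.coe_castSucc, Fin.val_succ]
  have hu := u.isLt
  set a := π⁻¹ i with ha
  have hval := rot_inv_val m a
  rcases eq_or_ne i (π 0) with hi | hi
  · rw [dif_pos hi]
    have ha0 : (a:ℕ) = 0 := by rw [ha, hi, Equiv.Perm.inv_apply_self]; rfl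
    rw [hval, if_pos ha0]
    simp only [Fin.val_mk]
    split_ifs <;> omega
  · rw [dif_neg hi]
    have ha0 : (a:ℕ) ≠ 0 := fun hh => hi ((Equiv.Perm.inv_eq_iff_eq).1 (Fin.ext hh))
    rw [hval, if_neg ha0]
    split_ifs <;> omega

lemma vert_rotL (b : Fin (m+1) → Fin p) (π : Equiv.Perm (Fin (m+1)))
    (hz : ¬ ((b (π (Fin.last m)) : ℕ) = 0)) (u : Fin (m+1)) :
    vert (((fun i => if i = π (Fin.last m) then
          (⟨(b i : ℕ) - 1, lt_of_le_of_lt (Nat.sub_le _ _) (b i).isLt⟩ : Fin p) else b i),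
        π * (finRotate (m+1))⁻¹) : Spx (m+1) p) u.succ
      = vert (b, π) u.castSucc := by
  funext i
  unfold vert
  simp only [mul_inv_rev, inv_inv, Equiv.Perm.mul_apply, Fin.coe_castSucc, Fin.val_succ]
  have hu := u.isLt
  set a := π⁻¹ i with ha
  have hval := rot_val m a
  rcases eq_or_ne i (π (Fin.last m)) with hi | hi
  · rw [if_pos hi]
    have hb1 : 1 ≤ (b i : ℕ) := by rw [hi]; omega
    have ha0 : (a:ℕ) = m := by rw [ha, hi, Equiv.Perm.inv_apply_self]; rfl
    rw [hval, if_pos ha0]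
    simp only [Fin.val_mk]
    split_ifs <;> omega
  · rw [if_neg hi]
    have ha0 : (a:ℕ) ≠ m := fun hh =>
      hi ((Equiv.Perm.inv_eq_iff_eq).1 (Fin.ext (hh.trans (Fin.val_last m).symm)))
    rw [hval, if_neg ha0]
    split_ifs <;> omega
end

section
variable {m p : ℕ} (ℓ : (Fin (m+1) → ℕ) → Fin (m+1) → Bool)

lemma rotL0 : finRotate (m+1) (Fin.last m) = 0 := by
  rw [finRotate_succ_apply, Fin.last_add_one]

lemma rotI0 : (finRotate (m+1))⁻¹ 0 = Fin.last m := by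
  rw [Equiv.Perm.inv_eq_iff_eq, finRotate_succ_apply, Fin.last_add_one]

/-- On a door with removed bottom vertex, the base can be bumped in direction `π 0`. -/
lemma zero_good (hB1 : ∀ x : Fin (m+1) → ℕ, (∀ i, x i ≤ p) → ∀ i, x i = p → ℓ x i = true)
    (b : Fin (m+1) → Fin p) (π : Equiv.Perm (Fin (m+1))) (j : Fin (m+2)) (hj : (j:ℕ) = 0)
    (hdoor : IsDoorAt ℓ (b,π) j) : (b (π 0) : ℕ) + 1 < p := by
  by_contra hcon
  have hlt := (b (π 0)).isLt
  have heq : (b (π 0) : ℕ) + 1 = p := by omega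
  obtain ⟨t, htj, hlab⟩ := hdoor (π 0)
  have ht0 : 0 < (t:ℕ) := by
    rcases Nat.eq_zero_or_pos (t:ℕ) with h | h
    · exact absurd (Fin.ext (h.trans hj.symm)) htj
    · exact h
  have hcoord : vert ((b,π) : Spx (m+1) p) t (π 0) = p := by
    unfold vert
    simp only [Equiv.Perm.inv_apply_self, Fin.val_zero]
    rw [if_pos ht0]
    exact heq
  have hbit := hB1 (vert (b,π) t) (vert_le _ _) (π 0) hcoord
  exact rho_ne_of_bit_true (π 0).isLt (by rwa [Fin.eta]) hlab

/-- At a boundary fixed point, the last step direction is the last coordinate. -/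
lemma last_face (hB0 : ∀ x : Fin (m+1) → ℕ, (∀ i, x i ≤ p) → ∀ i, x i = 0 → ℓ x i = false)
    (b : Fin (m+1) → Fin p) (π : Equiv.Perm (Fin (m+1))) (j : Fin (m+2)) (hj : (j:ℕ) = m+1)
    (hz : (b (π (Fin.last m)) : ℕ) = 0)
    (hdoor : IsDoorAt ℓ (b,π) j) : π (Fin.last m) = Fin.last m := by
  obtain ⟨t, htj, hlab⟩ := hdoor (Fin.last m)
  have htl : (t:ℕ) < m+1 := by
    have := t.isLt
    rcases Nat.lt_or_ge (t:ℕ) (m+1) with h | h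
    · exact h
    · exact absurd (Fin.ext (by omega : (t:ℕ) = (j:ℕ))) htj
  have hcoord : vert ((b,π) : Spx (m+1) p) t (π (Fin.last m)) = 0 := by
    unfold vert
    simp only [Equiv.Perm.inv_apply_self, Fin.val_last]
    rw [if_neg (by omega)]
    simpa using hz
  have hbit := hB0 (vert (b,π) t) (vert_le _ _) (π (Fin.last m)) hcoord
  have hle := rho_le_of_bit_false (π (Fin.last m)).isLt (by rwa [Fin.eta]) (ℓ := ℓ)
  rw [Fin.val_last] at hlab
  unfold Lab at hlab
  rw [hlab] at hle
  have := (π (Fin.last m)).isLt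
  exact Fin.ext (by simp; omega)

lemma flip_mem (hB1 : ∀ x : Fin (m+1) → ℕ, (∀ i, x i ≤ p) → ∀ i, x i = p → ℓ x i = true)
    (e : Spx (m+1) p × Fin (m+2)) (he : IsDoorAt ℓ e.1 e.2) :
    IsDoorAt ℓ (flip m p e).1 (flip m p e).2 := by
  obtain ⟨⟨b, π⟩, j⟩ := e
  rcases eq_or_ne (j:ℕ) 0 with hj | hj0
  · have h := zero_good ℓ hB1 b π j hj he
    rw [flip_zero b π j hj h]
    intro m'
    obtain ⟨t, htj, hlab⟩ := he m'
    have ht0 : t ≠ 0 := fun hh => htj (by rw [hh]; exact (Fin.ext hj).symm)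
    obtain ⟨u, hu⟩ := Fin.eq_succ_of_ne_zero ht0
    refine ⟨u.castSucc, ?_, ?_⟩
    · intro hh
      have := congrArg Fin.val hh
      simp at this
      omega
    · unfold Lab
      rw [vert_rot0 b π h u, ← hu]
      exact hlab
  · rcases eq_or_ne (j:ℕ) (m+1) with hj | hjl
    · by_cases hz : (b (π (Fin.last m)) : ℕ) = 0
      · rw [flip_last_fix b π j hj hz]; exact he
      · rw [flip_last b π j hj hz]
        intro m'
        obtain ⟨t, htj, hlab⟩ := he m'
        have htl : t ≠ Fin.last (m+1) := fun hh => htj (by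
          rw [hh]; exact Fin.ext (by simp [hj]))
        obtain ⟨u, hu⟩ := Fin.eq_castSucc_of_ne_last htl
        refine ⟨u.succ, Fin.succ_ne_zero u, ?_⟩
        unfold Lab
        rw [vert_rotL b π hz u, hu]
        exact hlab
    · have hj2 : (j:ℕ) < m+1 := by have := j.isLt; omega
      rw [flip_middle b π j hj0 hj2]
      intro m'
      obtain ⟨t, htj, hlab⟩ := he m'
      refine ⟨t, htj, ?_⟩
      unfold Lab
      rw [vert_middle b π j hj0 hj2 t htj]
      exact hlab

lemma flip_flip (hB1 : ∀ x : Fin (m+1) → ℕ, (∀ i, x i ≤ p) → ∀ i, x i = p → ℓ x i = true)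
    (e : Spx (m+1) p × Fin (m+2)) (he : IsDoorAt ℓ e.1 e.2) :
    flip m p (flip m p e) = e := by
  obtain ⟨⟨b, π⟩, j⟩ := e
  rcases eq_or_ne (j:ℕ) 0 with hj | hj0
  · have h := zero_good ℓ hB1 b π j hj he
    rw [flip_zero b π j hj h]
    set b' : Fin (m+1) → Fin p :=
      fun i => if hi : i = π 0 then (⟨(b i : ℕ) + 1, by rw [hi]; exact h⟩ : Fin p) else b i with hb'
    have hπ' : (π * finRotate (m+1)) (Fin.last m) = π 0 := by
      rw [Equiv.Perm.mul_apply, rotL0]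
    have hb'v : (b' (π 0) : ℕ) = (b (π 0) : ℕ) + 1 := by
      rw [hb']; simp
    have hz : ¬ ((b' ((π * finRotate (m+1)) (Fin.last m)) : ℕ) = 0) := by
      rw [hπ', hb'v]; omega
    rw [flip_last b' (π * finRotate (m+1)) (Fin.last (m+1)) (by simp) hz]
    refine Prod.ext (Prod.ext ?_ ?_) ?_
    · funext i
      simp only []
      rcases eq_or_ne i ((π * finRotate (m+1)) (Fin.last m)) with hi | hi
      · rw [if_pos hi]
        apply Fin.ext
        simp only [Fin.val_mk]
        rw [hπ'] at hi
        rw [hb']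
        simp only [dif_pos hi]
        simp
      · rw [if_neg hi]
        rw [hπ'] at hi
        rw [hb']
        simp only [dif_neg hi]
    · simp only []
      rw [mul_inv_cancel_right]
    · simp only []
      exact (Fin.ext hj.symm)
  · rcases eq_or_ne (j:ℕ) (m+1) with hj | hjl
    · by_cases hz : (b (π (Fin.last m)) : ℕ) = 0
      · rw [flip_last_fix b π j hj hz, flip_last_fix b π j hj hz]
      · rw [flip_last b π j hj hz]
        set b'' : Fin (m+1) → Fin p := fun i => if i = π (Fin.last m) then
            (⟨(b i : ℕ) - 1, lt_of_le_of_lt (Nat.sub_le _ _) (b i).isLt⟩ : Fin p) else b i with hb''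
        have hπ'' : (π * (finRotate (m+1))⁻¹) 0 = π (Fin.last m) := by
          rw [Equiv.Perm.mul_apply, rotI0]
        have hgood : (b'' ((π * (finRotate (m+1))⁻¹) 0) : ℕ) + 1 < p := by
          rw [hπ'', hb'']
          simp only [if_pos rfl, Fin.val_mk, if_true]
          have := (b (π (Fin.last m))).isLt
          omega
        rw [flip_zero b'' (π * (finRotate (m+1))⁻¹) 0 rfl hgood]
        refine Prod.ext (Prod.ext ?_ ?_) ?_
        · funext i
          simp only []
          rcases eq_or_ne i ((π * (finRotate (m+1))⁻¹) 0) with hi | hi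
          · rw [dif_pos hi]
            apply Fin.ext
            simp only [Fin.val_mk]
            rw [hπ''] at hi
            rw [hb'']
            simp only [if_pos hi, Fin.val_mk]
            have hb1 : 1 ≤ (b i : ℕ) := by rw [hi]; omega
            omega
          · rw [dif_neg hi]
            rw [hπ''] at hi
            rw [hb'']
            simp only [if_neg hi]
        · simp only []
          rw [inv_mul_cancel_right]
        · simp only []
          exact (Fin.ext (by simp [hj]))
    · have hj2 : (j:ℕ) < m+1 := by have := j.isLt; omega
      rw [flip_middle b π j hj0 hj2,
        flip_middle b (π * Equiv.swap (⟨(j:ℕ)-1, by omega⟩ : Fin (m+1))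
          (⟨(j:ℕ), hj2⟩ : Fin (m+1))) j hj0 hj2]
      refine Prod.ext (Prod.ext rfl ?_) rfl
      simp only []
      rw [mul_assoc, Equiv.swap_mul_self, mul_one]
end

section
variable {m p : ℕ} (ℓ : (Fin (m+1) → ℕ) → Fin (m+1) → Bool)

lemma flip_fix_iff (hB1 : ∀ x : Fin (m+1) → ℕ, (∀ i, x i ≤ p) → ∀ i, x i = p → ℓ x i = true)
    (e : Spx (m+1) p × Fin (m+2)) (he : IsDoorAt ℓ e.1 e.2) :
    flip m p e = e ↔ ((e.2:ℕ) = m+1 ∧ (e.1.1 (e.1.2 (Fin.last m)) : ℕ) = 0) := by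
  obtain ⟨⟨b, π⟩, j⟩ := e
  constructor
  · intro hfix
    rcases eq_or_ne (j:ℕ) 0 with hj | hj0
    · exfalso
      rw [flip_zero b π j hj (zero_good ℓ hB1 b π j hj he)] at hfix
      have := congrArg (fun x => (x.2 : ℕ)) hfix
      simp only [Fin.val_last] at this
      omega
    · rcases eq_or_ne (j:ℕ) (m+1) with hj | hjl
      · by_cases hz : (b (π (Fin.last m)) : ℕ) = 0
        · exact ⟨hj, hz⟩
        · exfalso
          rw [flip_last b π j hj hz] at hfix
          have := congrArg (fun x => (x.2 : ℕ)) hfix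
          simp only [Fin.val_zero] at this
          omega
      · exfalso
        have hj2 : (j:ℕ) < m+1 := by have := j.isLt; omega
        rw [flip_middle b π j hj0 hj2] at hfix
        have hππ := congrArg (fun x => x.1.2) hfix
        simp only [] at hππ
        have := congrArg (fun σ : Equiv.Perm (Fin (m+1)) =>
          σ (⟨(j:ℕ)-1, by omega⟩ : Fin (m+1))) hππ
        simp only [Equiv.Perm.mul_apply, Equiv.swap_apply_left] at this
        have h2 := π.injective this
        have := congrArg Fin.val h2
        simp only [Fin.val_mk] at this
        omega
  · rintro ⟨hj, hz⟩
    exact flip_last_fix b π j hj hz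

/-- Restriction of a permutation fixing the last element. -/
def permRestrict (π : Equiv.Perm (Fin (m+1))) (hπ : π (Fin.last m) = Fin.last m) :
    Equiv.Perm (Fin m) where
  toFun i := (π i.castSucc).castPred (by
    intro hh
    exact absurd (π.injective (hh.trans hπ.symm)) (Fin.castSucc_lt_last i).ne)
  invFun i := (π⁻¹ i.castSucc).castPred (by
    intro hh
    have h2 : i.castSucc = π (Fin.last m) := by
      conv_lhs => rw [← Equiv.Perm.apply_inv_self π i.castSucc, hh]
    rw [hπ] at h2
    exact absurd h2 (Fin.castSucc_lt_last i).ne)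
  left_inv i := by
    apply Fin.castSucc_injective
    simp [Fin.castSucc_castPred]
  right_inv i := by
    apply Fin.castSucc_injective
    simp [Fin.castSucc_castPred]

lemma permRestrict_inv_val (π : Equiv.Perm (Fin (m+1))) (hπ : π (Fin.last m) = Fin.last m)
    (i : Fin m) : (((permRestrict π hπ)⁻¹ i : Fin m) : ℕ) = ((π⁻¹ i.castSucc : Fin (m+1)) : ℕ) := by
  rfl

/-- Extension of a permutation by fixing the last element. -/
def permExtend (σ : Equiv.Perm (Fin m)) : Equiv.Perm (Fin (m+1)) where
  toFun := Fin.lastCases (Fin.last m) (fun i => (σ i).castSucc)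
  invFun := Fin.lastCases (Fin.last m) (fun i => (σ⁻¹ i).castSucc)
  left_inv i := by
    induction i using Fin.lastCases with
    | last => simp
    | cast i => simp
  right_inv i := by
    induction i using Fin.lastCases with
    | last => simp
    | cast i => simp

lemma permExtend_last (σ : Equiv.Perm (Fin m)) : permExtend σ (Fin.last m) = Fin.last m := by
  simp [permExtend]

lemma permExtend_castSucc (σ : Equiv.Perm (Fin m)) (i : Fin m) :
    permExtend σ i.castSucc = (σ i).castSucc := by
  simp [permExtend]

lemma permRestrict_extend (σ : Equiv.Perm (Fin m)) :
    permRestrict (permExtend σ) (permExtend_last σ) = σ := by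
  apply Equiv.ext
  intro i
  apply Fin.castSucc_injective
  simp [permRestrict, Fin.castSucc_castPred, permExtend_castSucc]

lemma permExtend_restrict (π : Equiv.Perm (Fin (m+1))) (hπ : π (Fin.last m) = Fin.last m) :
    permExtend (permRestrict π hπ) = π := by
  apply Equiv.ext
  intro i
  induction i using Fin.lastCases with
  | last => rw [permExtend_last, hπ]
  | cast i =>
    rw [permExtend_castSucc]
    simp [permRestrict, Fin.castSucc_castPred]
end
section
variable {m p : ℕ} (ℓ : (Fin (m+1) → ℕ) → Fin (m+1) → Bool)

/-- The induced labelling on the bottom face `x_last = 0`. -/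
def ldown (ℓ : (Fin (m+1) → ℕ) → Fin (m+1) → Bool) : (Fin m → ℕ) → Fin m → Bool :=
  fun x i => ℓ (Fin.snoc x 0) i.castSucc

lemma snoc_grid {x' : Fin m → ℕ} (hg : ∀ i, x' i ≤ p) :
    ∀ i, (Fin.snoc x' 0 : Fin (m+1) → ℕ) i ≤ p := by
  intro i
  induction i using Fin.lastCases with
  | last => simp
  | cast i => simpa using hg i

lemma rho_snoc (hB0 : ∀ x : Fin (m+1) → ℕ, (∀ i, x i ≤ p) → ∀ i, x i = 0 → ℓ x i = false)
    (x' : Fin m → ℕ) (hg : ∀ i, x' i ≤ p) :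
    rho (ldown ℓ) x' = rho ℓ (Fin.snoc x' 0) := by
  have hlastbit : ℓ (Fin.snoc x' 0) (Fin.last m) = false :=
    hB0 _ (snoc_grid hg) _ (by simp)
  have hrle : rho ℓ (Fin.snoc x' 0) ≤ m :=
    rho_le_of_bit_false (Nat.lt_succ_self m)
      (by rw [show (⟨m, Nat.lt_succ_self m⟩ : Fin (m+1)) = Fin.last m from rfl]; exact hlastbit)
  set r := rho ℓ (Fin.snoc x' 0) with hr
  have le1 : rho (ldown ℓ) x' ≤ r := by
    rcases Nat.lt_or_ge r m with h | h
    · apply rho_le_of_bit_false h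
      show ℓ (Fin.snoc x' 0) (Fin.castSucc ⟨r, h⟩) = false
      have : Fin.castSucc (⟨r, h⟩ : Fin m) = ⟨r, by omega⟩ := Fin.ext rfl
      rw [this]
      exact rho_bit_false (by omega)
    · have := rho_le (ldown ℓ) x'
      omega
  have le2 : r ≤ rho (ldown ℓ) x' := by
    by_contra hcon
    push_neg at hcon
    have hlt : rho (ldown ℓ) x' < m := by omega
    have hbit := rho_bit_false (ℓ := ldown ℓ) (x := x') hlt
    have : ℓ (Fin.snoc x' 0) ⟨rho (ldown ℓ) x', by omega⟩ = false := by
      have h2 : (⟨rho (ldown ℓ) x', by omega⟩ : Fin (m+1))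
          = Fin.castSucc ⟨rho (ldown ℓ) x', hlt⟩ := Fin.ext rfl
      rw [h2]
      exact hbit
    have := rho_le_of_bit_false (by omega : rho (ldown ℓ) x' < m+1) this
    omega
  omega

lemma vert_restrict (b : Fin (m+1) → Fin p) (π : Equiv.Perm (Fin (m+1)))
    (hπ : π (Fin.last m) = Fin.last m) (hb : (b (Fin.last m) : ℕ) = 0) (u : Fin (m+1)) :
    (Fin.snoc (vert (((fun k => b k.castSucc), permRestrict π hπ) : Spx m p) u) 0
        : Fin (m+1) → ℕ)
      = vert ((b, π) : Spx (m+1) p) u.castSucc := by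
  funext i
  induction i using Fin.lastCases with
  | last =>
    rw [Fin.snoc_last]
    unfold vert
    dsimp only
    have hπinv : π⁻¹ (Fin.last m) = Fin.last m := by
      rw [Equiv.Perm.inv_eq_iff_eq, hπ]
    rw [hπinv]
    rw [if_neg (by simp [Fin.coe_castSucc]; omega)]
    omega
  | cast i =>
    rw [Fin.snoc_castSucc]
    unfold vert
    dsimp only
    simp only [Fin.coe_castSucc]
    rw [permRestrict_inv_val]

/-- Labels are compatible with restriction to the bottom face. -/
lemma Lab_restrict (hB0 : ∀ x : Fin (m+1) → ℕ, (∀ i, x i ≤ p) → ∀ i, x i = 0 → ℓ x i = false)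
    (b : Fin (m+1) → Fin p) (π : Equiv.Perm (Fin (m+1)))
    (hπ : π (Fin.last m) = Fin.last m) (hb : (b (Fin.last m) : ℕ) = 0) (u : Fin (m+1)) :
    Lab (ldown ℓ) (((fun k => b k.castSucc), permRestrict π hπ) : Spx m p) u
      = Lab ℓ ((b, π) : Spx (m+1) p) u.castSucc := by
  unfold Lab
  rw [rho_snoc ℓ hB0 _ (fun i => vert_le _ _ _), vert_restrict b π hπ hb u]
end

section
variable {m p : ℕ} (ℓ : (Fin (m+1) → ℕ) → Fin (m+1) → Bool)

def Fset (m p : ℕ) (ℓ : (Fin (m+1) → ℕ) → Fin (m+1) → Bool) :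
    Finset (Spx (m+1) p × Fin (m+2)) :=
  (univ.filter fun e : Spx (m+1) p × Fin (m+2) => IsDoorAt ℓ e.1 e.2).filter
    fun e => flip m p e = e

lemma memF_door {e : Spx (m+1) p × Fin (m+2)} (he : e ∈ Fset m p ℓ) : IsDoorAt ℓ e.1 e.2 := by
  unfold Fset at he
  simp only [Finset.mem_filter, Finset.mem_univ, true_and] at he
  exact he.1

lemma memF_fix {e : Spx (m+1) p × Fin (m+2)} (he : e ∈ Fset m p ℓ) : flip m p e = e := by
  unfold Fset at he
  simp only [Finset.mem_filter, Finset.mem_univ, true_and] at he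
  exact he.2

lemma memF_j (hB1 : ∀ x : Fin (m+1) → ℕ, (∀ i, x i ≤ p) → ∀ i, x i = p → ℓ x i = true)
    {e : Spx (m+1) p × Fin (m+2)} (he : e ∈ Fset m p ℓ) :
    (e.2:ℕ) = m+1 ∧ (e.1.1 (e.1.2 (Fin.last m)) : ℕ) = 0 :=
  (flip_fix_iff ℓ hB1 e (memF_door ℓ he)).1 (memF_fix ℓ he)

lemma memF_pi (hB0 : ∀ x : Fin (m+1) → ℕ, (∀ i, x i ≤ p) → ∀ i, x i = 0 → ℓ x i = false)
    (hB1 : ∀ x : Fin (m+1) → ℕ, (∀ i, x i ≤ p) → ∀ i, x i = p → ℓ x i = true)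
    {e : Spx (m+1) p × Fin (m+2)} (he : e ∈ Fset m p ℓ) :
    e.1.2 (Fin.last m) = Fin.last m :=
  last_face ℓ hB0 e.1.1 e.1.2 e.2 (memF_j ℓ hB1 he).1 (memF_j ℓ hB1 he).2 (memF_door ℓ he)

lemma memF_blast (hB0 : ∀ x : Fin (m+1) → ℕ, (∀ i, x i ≤ p) → ∀ i, x i = 0 → ℓ x i = false)
    (hB1 : ∀ x : Fin (m+1) → ℕ, (∀ i, x i ≤ p) → ∀ i, x i = p → ℓ x i = true)
    {e : Spx (m+1) p × Fin (m+2)} (he : e ∈ Fset m p ℓ) :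
    (e.1.1 (Fin.last m) : ℕ) = 0 := by
  have h := (memF_j ℓ hB1 he).2
  rwa [memF_pi ℓ hB0 hB1 he] at h

lemma ldown_B0 (hB0 : ∀ x : Fin (m+1) → ℕ, (∀ i, x i ≤ p) → ∀ i, x i = 0 → ℓ x i = false) :
    ∀ x : Fin m → ℕ, (∀ i, x i ≤ p) → ∀ i, x i = 0 → ldown ℓ x i = false := by
  intro x hg i hx
  unfold ldown
  exact hB0 _ (snoc_grid hg) _ (by rw [Fin.snoc_castSucc]; exact hx)

lemma ldown_B1 (hB1 : ∀ x : Fin (m+1) → ℕ, (∀ i, x i ≤ p) → ∀ i, x i = p → ℓ x i = true) :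
    ∀ x : Fin m → ℕ, (∀ i, x i ≤ p) → ∀ i, x i = p → ldown ℓ x i = true := by
  intro x hg i hx
  unfold ldown
  exact hB1 _ (snoc_grid hg) _ (by rw [Fin.snoc_castSucc]; exact hx)

lemma fixed_card (hp : 0 < p)
    (hB0 : ∀ x : Fin (m+1) → ℕ, (∀ i, x i ≤ p) → ∀ i, x i = 0 → ℓ x i = false)
    (hB1 : ∀ x : Fin (m+1) → ℕ, (∀ i, x i ≤ p) → ∀ i, x i = p → ℓ x i = true) :
    (Fset m p ℓ).card = (univ.filter (IsFull (p := p) (ldown ℓ))).card := by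
  refine Finset.card_bij'
    (fun e he => (((fun k => e.1.1 k.castSucc) : Fin m → Fin p),
        permRestrict e.1.2 (memF_pi ℓ hB0 hB1 he)))
    (fun s _ => (((Fin.snoc s.1 (⟨0, hp⟩ : Fin p) : Fin (m+1) → Fin p), permExtend s.2),
        Fin.last (m+1)))
    ?_ ?_ ?_ ?_
  · -- forward membership : restricted simplex is full
    intro e he
    simp only [Finset.mem_filter, Finset.mem_univ, true_and]
    intro m'
    obtain ⟨t, htj, hlab⟩ := memF_door ℓ he m'
    have hel : e.2 = Fin.last (m+1) := Fin.ext (by simp [(memF_j ℓ hB1 he).1])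
    have htl : t ≠ Fin.last (m+1) := fun hh => htj (hh.trans hel.symm)
    obtain ⟨u, hu⟩ := Fin.eq_castSucc_of_ne_last htl
    refine ⟨u, ?_⟩
    rw [Lab_restrict ℓ hB0 e.1.1 e.1.2 (memF_pi ℓ hB0 hB1 he) (memF_blast ℓ hB0 hB1 he) u]
    rw [hu]
    exact hlab
  · -- backward membership
    intro s hs
    simp only [Finset.mem_filter, Finset.mem_univ, true_and] at hs
    have hπl := permExtend_last s.2
    have hbl : ((Fin.snoc s.1 (⟨0, hp⟩ : Fin p) : Fin (m+1) → Fin p) (Fin.last m) : ℕ) = 0 := by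
      rw [Fin.snoc_last]
    have hpair : (((fun k => (Fin.snoc s.1 (⟨0, hp⟩ : Fin p) : Fin (m+1) → Fin p) k.castSucc) :
        Fin m → Fin p), permRestrict (permExtend s.2) hπl) = s := by
      refine Prod.ext ?_ ?_
      · funext k
        simp only [Fin.snoc_castSucc]
      · exact permRestrict_extend s.2
    unfold Fset
    simp only [Finset.mem_filter, Finset.mem_univ, true_and]
    constructor
    · -- door
      intro m'
      obtain ⟨u, hlab⟩ := hs m'
      refine ⟨u.castSucc, ?_, ?_⟩
      · intro hh
        exact absurd hh (Fin.castSucc_lt_last u).ne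
      · have := Lab_restrict ℓ hB0 (Fin.snoc s.1 (⟨0, hp⟩ : Fin p)) (permExtend s.2) hπl hbl u
        rw [hpair] at this
        rw [← this]
        exact hlab
    · -- fixed
      apply flip_last_fix
      · simp
      · rw [hπl]
        exact hbl
  · -- left inverse
    intro e he
    refine Prod.ext (Prod.ext ?_ ?_) ?_
    · funext i
      induction i using Fin.lastCases with
      | last =>
        simp only [Fin.snoc_last]
        exact Fin.ext (memF_blast ℓ hB0 hB1 he).symm
      | cast i => simp only [Fin.snoc_castSucc]
    · exact permExtend_restrict e.1.2 (memF_pi ℓ hB0 hB1 he)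
    · exact Fin.ext (by simp [(memF_j ℓ hB1 he).1])
  · -- right inverse
    intro s hs
    refine Prod.ext ?_ ?_
    · funext k
      simp only [Fin.snoc_castSucc]
    · exact permRestrict_extend s.2
end

/-- Kuhn's combinatorial lemma (counting form): the number of fully labelled
Kuhn simplices is odd. -/
theorem full_count_odd : ∀ (n p : ℕ) (ℓ : (Fin n → ℕ) → Fin n → Bool), 0 < p →
    (∀ x : Fin n → ℕ, (∀ i, x i ≤ p) → ∀ i, x i = 0 → ℓ x i = false) →
    (∀ x : Fin n → ℕ, (∀ i, x i ≤ p) → ∀ i, x i = p → ℓ x i = true) →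
    ((((univ : Finset (Spx n p)).filter (IsFull (p := p) ℓ)).card : ℕ) : ZMod 2) = 1 := by
  intro n
  induction n with
  | zero =>
    intro p ℓ hp _ _
    have hall : ∀ s : Spx 0 p, IsFull ℓ s := by
      intro s m'
      refine ⟨0, ?_⟩
      have hm : (m' : ℕ) = 0 := by omega
      rw [hm]
      unfold Lab rho
      rw [Nat.find_eq_zero]
      intro h
      exact absurd h (by omega)
    rw [Finset.filter_true_of_mem (fun s _ => hall s), Finset.card_univ]
    have h1 : Fintype.card (Spx 0 p) = 1 := by
      rw [Fintype.card_eq_one_iff]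
      refine ⟨(fun i => i.elim0, 1), ?_⟩
      rintro ⟨b, π⟩
      refine Prod.ext ?_ ?_
      · funext i; exact i.elim0
      · apply Equiv.ext; intro i; exact i.elim0
    rw [h1]
    rfl
  | succ m ih =>
    intro p ℓ hp hB0 hB1
    have e1 := (E_card (n := m+1) (p := p) ℓ).symm
    have e2 := card_invol
      (univ.filter fun e : Spx (m+1) p × Fin (m+2) => IsDoorAt ℓ e.1 e.2)
      (flip m p)
      (by
        intro e he
        simp only [Finset.mem_filter, Finset.mem_univ, true_and] at he ⊢
        exact flip_mem ℓ hB1 e he)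
      (by
        intro e he
        simp only [Finset.mem_filter, Finset.mem_univ, true_and] at he
        exact flip_flip ℓ hB1 e he)
    have e3 : ((univ.filter fun e : Spx (m+1) p × Fin (m+2) => IsDoorAt ℓ e.1 e.2).filter
        fun e => flip m p e = e).card = (univ.filter (IsFull (p := p) (ldown ℓ))).card :=
      fixed_card ℓ hp hB0 hB1
    have e4 := ih p (ldown ℓ) hp (ldown_B0 ℓ hB0) (ldown_B1 ℓ hB1)
    rw [e1, e2, e3, e4]

/-- Kuhn's lemma, existence form. -/
theorem exists_full (n p : ℕ) (ℓ : (Fin n → ℕ) → Fin n → Bool) (hp : 0 < p)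
    (hB0 : ∀ x : Fin n → ℕ, (∀ i, x i ≤ p) → ∀ i, x i = 0 → ℓ x i = false)
    (hB1 : ∀ x : Fin n → ℕ, (∀ i, x i ≤ p) → ∀ i, x i = p → ℓ x i = true) :
    ∃ s : Spx n p, IsFull ℓ s := by
  by_contra hcon
  push_neg at hcon
  have : ((univ : Finset (Spx n p)).filter (IsFull (p := p) ℓ)) = ∅ :=
    Finset.filter_false_of_mem (fun s _ => hcon s)
  have h := full_count_odd n p ℓ hp hB0 hB1
  rw [this] at h
  simp at h

lemma vert_bounds {n p : ℕ} (s : Spx n p) (j : Fin (n+1)) (i : Fin n) :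
    (s.1 i : ℕ) ≤ vert s j i ∧ vert s j i ≤ (s.1 i : ℕ) + 1 := by
  unfold vert; split_ifs <;> omega

/-- Brouwer fixed point theorem for the unit cube `[0,1]^n`. -/
theorem brouwer_cube (n : ℕ) (f : (Fin n → ℝ) → (Fin n → ℝ)) (hf : Continuous f)
    (hrange : ∀ z : Fin n → ℝ, (∀ i, z i ∈ Set.Icc (0:ℝ) 1) → ∀ i, f z i ∈ Set.Icc (0:ℝ) 1) :
    ∃ z : Fin n → ℝ, (∀ i, z i ∈ Set.Icc (0:ℝ) 1) ∧ f z = z := by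
  classical
  by_contra hcon
  push_neg at hcon
  set K : Set (Fin n → ℝ) := Set.Icc 0 1 with hK
  have hmemK : ∀ z : Fin n → ℝ, z ∈ K ↔ ∀ i, z i ∈ Set.Icc (0:ℝ) 1 := by
    intro z
    rw [hK, Set.mem_Icc]
    constructor
    · rintro ⟨h0, h1⟩ i; exact ⟨h0 i, h1 i⟩
    · intro h; exact ⟨fun i => (h i).1, fun i => (h i).2⟩
  have hKc : IsCompact K := isCompact_Icc
  have hKne : K.Nonempty := ⟨0, by rw [hmemK]; intro i; simp⟩
  obtain ⟨z₀, hz₀K, hmin⟩ := hKc.exists_isMinOn hKne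
    ((continuous_id.dist hf).continuousOn : ContinuousOn (fun z => dist z (f z)) K)
  set δ₀ := dist z₀ (f z₀) with hδ₀def
  have hδ₀ : 0 < δ₀ := by
    rw [hδ₀def, dist_pos]
    exact fun h => hcon z₀ ((hmemK z₀).1 hz₀K) h.symm
  have huc := hKc.uniformContinuousOn_of_continuous hf.continuousOn
  rw [Metric.uniformContinuousOn_iff] at huc
  obtain ⟨η, hη, hucs⟩ := huc (δ₀/4) (by positivity)
  obtain ⟨p, hp⟩ := exists_nat_one_div_lt (lt_min hη (by positivity : (0:ℝ) < δ₀/4))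
  set P := p + 1 with hPdef
  have hP : 0 < P := Nat.succ_pos p
  have hPR : (0:ℝ) < P := by positivity
  have hPinv : 1/(P:ℝ) < η ∧ 1/(P:ℝ) < δ₀/4 := by
    constructor
    · exact lt_of_lt_of_le (by exact_mod_cast hp) (min_le_left _ _) |>.trans_le (le_refl _)
    · exact lt_of_lt_of_le (by exact_mod_cast hp) (min_le_right _ _)
  set φP : (Fin n → ℕ) → (Fin n → ℝ) := fun x i => (x i : ℝ)/P with hφP
  have hφPK : ∀ x : Fin n → ℕ, (∀ i, x i ≤ P) → ∀ i, φP x i ∈ Set.Icc (0:ℝ) 1 := by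
    intro x hx i
    constructor
    · positivity
    · rw [hφP]
      rw [div_le_one hPR]
      exact_mod_cast hx i
  set ℓ : (Fin n → ℕ) → Fin n → Bool :=
    fun x i => if x i = P ∨ f (φP x) i < φP x i then true else false with hℓ
  have hB0 : ∀ x : Fin n → ℕ, (∀ i, x i ≤ P) → ∀ i, x i = 0 → ℓ x i = false := by
    intro x hx i hxi
    have h0 : φP x i = 0 := by rw [hφP]; simp [hxi]
    have hge0 : 0 ≤ f (φP x) i := (hrange (φP x) (hφPK x hx) i).1
    have hcond : ¬(x i = P ∨ f (φP x) i < φP x i) := by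
      push_neg
      refine ⟨by omega, ?_⟩
      rw [h0]
      exact hge0
    rw [hℓ]
    exact if_neg hcond
  have hB1 : ∀ x : Fin n → ℕ, (∀ i, x i ≤ P) → ∀ i, x i = P → ℓ x i = true := by
    intro x hx i hxi
    rw [hℓ]
    exact if_pos (Or.inl hxi)
  obtain ⟨s, hs⟩ := exists_full n P ℓ hP hB0 hB1
  -- distances between scaled vertices
  have hvK : ∀ j, φP (vert s j) ∈ K := by
    intro j
    rw [hmemK]
    exact hφPK _ (fun i => vert_le s j i)
  have hclose : ∀ j j', dist (φP (vert s j)) (φP (vert s j')) ≤ 1/(P:ℝ) := by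
    intro j j'
    rw [dist_pi_le_iff (by positivity)]
    intro i
    rw [Real.dist_eq, hφP]
    have h1 := vert_bounds s j i
    have h2 := vert_bounds s j' i
    rw [div_sub_div_same, abs_div, abs_of_pos hPR, div_le_div_iff_of_pos_right hPR]
    have r1 : ((s.1 i : ℕ):ℝ) ≤ (vert s j i : ℝ) := by exact_mod_cast h1.1
    have r2 : (vert s j i : ℝ) ≤ ((s.1 i : ℕ):ℝ) + 1 := by exact_mod_cast h1.2
    have r3 : ((s.1 i : ℕ):ℝ) ≤ (vert s j' i : ℝ) := by exact_mod_cast h2.1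
    have r4 : (vert s j' i : ℝ) ≤ ((s.1 i : ℕ):ℝ) + 1 := by exact_mod_cast h2.2
    rw [abs_le]
    constructor <;> linarith
  have hfc : ∀ j j' (i : Fin n),
      |f (φP (vert s j)) i - f (φP (vert s j')) i| ≤ δ₀/4 := by
    intro j j' i
    have hd := hucs _ (hvK j) _ (hvK j') (lt_of_le_of_lt (hclose j j') hPinv.1)
    have := dist_le_pi_dist (f (φP (vert s j))) (f (φP (vert s j'))) i
    rw [Real.dist_eq] at this
    linarith
  have hcoord : ∀ j j' (i : Fin n),
      |φP (vert s j) i - φP (vert s j') i| ≤ 1/(P:ℝ) := by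
    intro j j' i
    have := dist_le_pi_dist (φP (vert s j)) (φP (vert s j')) i
    rw [Real.dist_eq] at this
    exact this.trans (hclose j j')
  set ζ := φP (vert s 0) with hζ
  -- the key estimate
  have hkey : ∀ i : Fin n, |f ζ i - ζ i| ≤ δ₀/4 + 1/(P:ℝ) := by
    intro i
    obtain ⟨ju, hju⟩ := hs (Fin.last n)
    obtain ⟨jw, hjw⟩ := hs i.castSucc
    rw [Fin.val_last] at hju
    rw [Fin.coe_castSucc] at hjw
    -- bit i of vertex ju is true
    have hbitu : ℓ (vert s ju) i = true := by
      have h := bit_true_of_lt_rho (ℓ := ℓ) (x := vert s ju) (i := (i:ℕ))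
        (by unfold Lab at hju; rw [hju]; exact i.isLt) i.isLt
      rwa [Fin.eta] at h
    -- bit i of vertex jw is false
    have hbitw : ℓ (vert s jw) i = false := by
      have hlt : rho ℓ (vert s jw) < n := by unfold Lab at hjw; rw [hjw]; exact i.isLt
      have h := rho_bit_false hlt
      have he : (⟨rho ℓ (vert s jw), hlt⟩ : Fin n) = i := by
        apply Fin.ext
        unfold Lab at hjw
        simp [hjw]
      rwa [he] at h
    simp only [hℓ] at hbitu hbitw
    have hcu : vert s ju i = P ∨ f (φP (vert s ju)) i < φP (vert s ju) i := by
      by_contra hc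
      rw [if_neg hc] at hbitu
      exact Bool.false_ne_true hbitu
    have hcw : ¬(vert s jw i = P ∨ f (φP (vert s jw)) i < φP (vert s jw) i) := by
      intro hc
      rw [if_pos hc] at hbitw
      exact Bool.false_ne_true hbitw.symm
    push_neg at hcw
    have hw1 : φP (vert s jw) i ≤ f (φP (vert s jw)) i := hcw.2
    have d1 := hfc 0 jw i
    have d2 := hcoord 0 jw i
    rw [abs_le] at d1 d2
    rcases hcu with hcu | hcu
    · -- u-coordinate is at the top face
      have hu1 : φP (vert s ju) i = 1 := by
        rw [hφP]
        simp only [hcu]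
        field_simp
      have d4 := hcoord 0 ju i
      rw [abs_le] at d4
      have hub := (hrange ζ ((hmemK ζ).1 (hvK 0)) i).2
      rw [abs_le]
      constructor
      · -- lower bound
        linarith [hw1, d1.1, d1.2, d2.1, d2.2]
      · -- upper bound
        rw [hu1] at d4
        linarith [d4.1, d4.2, hPinv.2, hδ₀]
    · -- f < id at u
      have d3 := hfc 0 ju i
      have d4 := hcoord 0 ju i
      rw [abs_le] at d3 d4
      rw [abs_le]
      constructor
      · linarith [hw1, d1.1, d1.2, d2.1, d2.2]
      · linarith [hcu, d3.1, d3.2, d4.1, d4.2]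
  -- contradiction with minimality
  have hle : dist ζ (f ζ) ≤ δ₀/4 + 1/(P:ℝ) := by
    rw [dist_pi_le_iff (by positivity)]
    intro i
    rw [Real.dist_eq, abs_sub_comm]
    exact hkey i
  have hge : δ₀ ≤ dist ζ (f ζ) := hmin (hvK 0)
  linarith [hPinv.2]
end KuhnProof
/-- Surjectivity of the contraction map: for any impact parameters `y`, shifts
`φ̃_{ij}`, and any continuous bounded regularisation `sgn_ε` of the sign function,
there exist displacements `d` with
`y_i = d_i − (1/2) ∑_{j≠i} sgn_ε(d_j) φ̃_{ij}` for all `i`. -/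
theorem contraction_map_surjective (N : ℕ) (ε : ℝ) (hε : 0 < ε)
    (y : Fin N → ℝ) (φ : Fin N → Fin N → ℝ)
    (sgnε : ℝ → ℝ) (hcont : Continuous sgnε)
    (hbd : ∀ d, |sgnε d| ≤ 1)
    (hsgn : ∀ d : ℝ, ε ≤ |d| → sgnε d = if 0 ≤ d then 1 else -1) :
    ∃ d : Fin N → ℝ, ∀ i,
      y i = d i - (1 / 2) * ∑ j ∈ Finset.univ.erase i, sgnε (d j) * φ i j := by
  classical
  set T : (Fin N → ℝ) → (Fin N → ℝ) :=
    fun d i => y i + (1/2) * ∑ j ∈ Finset.univ.erase i, sgnε (d j) * φ i j with hT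
  have hTc : Continuous T := by
    rw [hT]
    apply continuous_pi
    intro i
    apply continuous_const.add
    apply continuous_const.mul
    apply continuous_finset_sum
    intro j _
    exact (hcont.comp (continuous_apply j)).mul continuous_const
  set C : Fin N → ℝ := fun i => |y i| + (1/2) * ∑ j ∈ Finset.univ.erase i, |φ i j| with hC
  have hC0 : ∀ i, 0 ≤ C i := by
    intro i
    rw [hC]
    have : (0:ℝ) ≤ ∑ j ∈ Finset.univ.erase i, |φ i j| :=
      Finset.sum_nonneg fun j _ => abs_nonneg _
    positivity
  set B : ℝ := 1 + ∑ i, C i with hB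
  have hB1 : 1 ≤ B := by
    rw [hB]
    have : (0:ℝ) ≤ ∑ i, C i := Finset.sum_nonneg fun i _ => hC0 i
    linarith
  have hB0 : 0 < B := by linarith
  have hTbd : ∀ d i, |T d i| ≤ B := by
    intro d i
    rw [hT]
    have h1 : |∑ j ∈ Finset.univ.erase i, sgnε (d j) * φ i j|
        ≤ ∑ j ∈ Finset.univ.erase i, |φ i j| := by
      refine (Finset.abs_sum_le_sum_abs _ _).trans (Finset.sum_le_sum ?_)
      intro j _
      rw [abs_mul]
      calc |sgnε (d j)| * |φ i j| ≤ 1 * |φ i j| :=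
            mul_le_mul_of_nonneg_right (hbd (d j)) (abs_nonneg _)
        _ = |φ i j| := one_mul _
    have h2 : |y i + (1/2) * ∑ j ∈ Finset.univ.erase i, sgnε (d j) * φ i j| ≤ C i := by
      refine (abs_add_le _ _).trans ?_
      rw [hC]
      have : |(1/2) * ∑ j ∈ Finset.univ.erase i, sgnε (d j) * φ i j|
          ≤ (1/2) * ∑ j ∈ Finset.univ.erase i, |φ i j| := by
        rw [abs_mul, abs_of_pos (by norm_num : (0:ℝ) < 1/2)]
        linarith
      linarith
    have h3 : C i ≤ ∑ k, C k := Finset.single_le_sum (fun k _ => hC0 k) (Finset.mem_univ i)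
    calc |y i + (1/2) * ∑ j ∈ Finset.univ.erase i, sgnε (d j) * φ i j| ≤ C i := h2
      _ ≤ ∑ k, C k := h3
      _ ≤ B := by rw [hB]; linarith
  set A : (Fin N → ℝ) → (Fin N → ℝ) := fun z k => 2*B*z k - B with hA
  have hAc : Continuous A := by
    rw [hA]
    exact continuous_pi fun k => (continuous_const.mul (continuous_apply k)).sub continuous_const
  set f : (Fin N → ℝ) → (Fin N → ℝ) := fun z i => (T (A z) i + B)/(2*B) with hf
  have hfc : Continuous f := by
    rw [hf]
    exact continuous_pi fun i =>
      (((continuous_apply i).comp (hTc.comp hAc)).add continuous_const).div_const _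
  have hfr : ∀ z : Fin N → ℝ, (∀ i, z i ∈ Set.Icc (0:ℝ) 1) → ∀ i, f z i ∈ Set.Icc (0:ℝ) 1 := by
    intro z _ i
    have h := hTbd (A z) i
    rw [abs_le] at h
    rw [hf]
    constructor
    · apply div_nonneg (by linarith) (by linarith)
    · rw [div_le_one (by linarith)]
      linarith
  obtain ⟨z, hzK, hfz⟩ := KuhnProof.brouwer_cube N f hfc hfr
  refine ⟨A z, ?_⟩
  intro i
  have hfi := congrFun hfz i
  rw [hf] at hfi
  have hdi : T (A z) i = A z i := by
    have hAv : A z i = 2*B*z i - B := rfl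
    field_simp at hfi
    rw [hAv]
    linarith
  rw [hT] at hdi
  dsimp only at hdi
  linarith [hdi]
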